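/- Let λ ∈ ℝ^n with λ_1 > 0 and λ_i ≥ 0, n ≥ 2, and let M : ⋃_{m=1}^n [0,∞)^m × W_m(ℝ) → [0,∞) be homogeneous in the entries and satisfy: (i) M((0,...,0,1),(λ_1,...,λ_{n-1})) = 1 and M((0,...,0,1),λ) = 1; (ii) x ↦ μ(x) := M((0,...,0,x,1),λ) is differentiable at 0 with μ'(0) < 0. If M satisfies the reversed (n,λ)-weighted Kedlaya inequality A(M-partial-means) ≥ M(A-partial-means) for all x ∈ [0,∞)^n, then λ_{n-1}/(λ_1+...+λ_{n-1}) ≥ λ_n/(λ_1+...+λ_n). -/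

import Mathlib

open Finset Topology Filter


lemma two_spike_sum (S : Finset ℕ) (a b : ℕ) (f : ℕ → ℝ) (p q : ℝ)
    (hf : ∀ j ∈ S, f j = (if j = a then p else 0) + (if j = b then q else 0)) :
    ∑ j ∈ S, f j = (if a ∈ S then p else 0) + (if b ∈ S then q else 0) := by
  rw [Finset.sum_congr rfl hf, Finset.sum_add_distrib,
    Finset.sum_ite_eq' S a, Finset.sum_ite_eq' S b]

lemma fin_sum_eq_Icc (k : ℕ) (lam : ℕ → ℝ) :
    ∑ i : Fin k, lam ((i:ℕ)+1) = ∑ i ∈ Icc 1 k, lam i := by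
  rw [Fin.sum_univ_eq_sum_range (fun j => lam (j+1)) k]
  induction k with
  | zero => simp
  | succ k ih =>
    rw [Finset.sum_range_succ, ih, show Icc 1 (k+1) = insert (k+1) (Icc 1 k) by
      ext j; simp [Nat.lt_succ_iff, Finset.mem_insert]; omega]
    rw [Finset.sum_insert (by simp)]; ring


/-- Necessity of the monotone-ratio condition: if a homogeneous weighted mean
`M` on `[0,∞)` normalizes the unit vectors as in (i), has the differentiability
property (ii) with negative derivative, and satisfies the reversed
`(n,λ)`-weighted Kedlaya inequality, then
`λ_{n-1}/Λ_{n-1} ≥ λ_n/Λ_n`. -/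
theorem reversed_kedlaya_necessary_condition
    (n : ℕ) (hn : 2 ≤ n) (lam : ℕ → ℝ)
    (hlam1 : 0 < lam 1) (hlam : ∀ i ∈ Icc 1 n, 0 ≤ lam i)
    (L : ℕ → ℝ) (hL : ∀ k, L k = ∑ i ∈ Icc 1 k, lam i)
    (M : (m : ℕ) → (Fin m → ℝ) → (Fin m → ℝ) → ℝ)
    -- M takes nonnegative values
    (hpos : ∀ (m : ℕ) (x w : Fin m → ℝ), 1 ≤ m → m ≤ n → (∀ i, 0 ≤ x i) →
      (∀ i, 0 ≤ w i) → 0 < ∑ i, w i → 0 ≤ M m x w)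
    -- homogeneity in the entries
    (hhom : ∀ (m : ℕ) (x w : Fin m → ℝ) (t : ℝ), 1 ≤ m → m ≤ n → 0 < t →
      (∀ i, 0 ≤ x i) → (∀ i, 0 ≤ w i) → 0 < ∑ i, w i →
      M m (fun i => t * x i) w = t * M m x w)
    -- property (i)
    (hi₁ : M (n - 1) (fun i => if (i : ℕ) = n - 2 then 1 else 0)
      (fun i => lam ((i : ℕ) + 1)) = 1)
    (hi₂ : M n (fun i => if (i : ℕ) = n - 1 then 1 else 0)
      (fun i => lam ((i : ℕ) + 1)) = 1)
    -- property (ii): μ is differentiable at 0 with μ'(0) < 0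
    (hii : ∃ d : ℝ, d < 0 ∧ HasDerivAt
      (fun x : ℝ => M n
        (fun i => if (i : ℕ) = n - 2 then x else if (i : ℕ) = n - 1 then 1 else 0)
        (fun i => lam ((i : ℕ) + 1))) d 0)
    -- reversed (n,λ)-weighted Kedlaya inequality
    (hked : ∀ x : ℕ → ℝ, (∀ i ∈ Icc 1 n, 0 ≤ x i) →
      M n (fun k : Fin n => (∑ j ∈ Icc 1 ((k : ℕ) + 1), lam j * x j) / L ((k : ℕ) + 1))
          (fun i => lam ((i : ℕ) + 1))
        ≤ (∑ k ∈ Icc 1 n, lam k *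
            M k (fun i : Fin k => x ((i : ℕ) + 1)) (fun i : Fin k => lam ((i : ℕ) + 1)))
            / L n) :
    lam n / L n ≤ lam (n - 1) / L (n - 1) := by
  obtain ⟨m, rfl⟩ : ∃ m, n = m + 2 := ⟨n - 2, by omega⟩
  clear hn
  have hsub1 : m + 2 - 1 = m + 1 := rfl
  have hsub2 : m + 2 - 2 = m := rfl
  simp only [hsub1, hsub2] at hi₂ hii ⊢
  have hi₁' : M (m+1) (fun i : Fin (m+1) => if (i:ℕ) = m then (1:ℝ) else 0)
      (fun i => lam ((i:ℕ)+1)) = 1 := hi₁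
  -- basic positivity
  have hlam' : ∀ i, 1 ≤ i → i ≤ m + 2 → 0 ≤ lam i := fun i h1 h2 =>
    hlam i (by simp [Finset.mem_Icc]; omega)
  have hLpos : ∀ k, 1 ≤ k → k ≤ m + 2 → 0 < L k := by
    intro k h1 h2
    rw [hL]
    apply Finset.sum_pos'
    · intro i hi
      simp [Finset.mem_Icc] at hi
      exact hlam' i hi.1 (by omega)
    · exact ⟨1, by simp [Finset.mem_Icc]; omega, hlam1⟩
  have hwsum : ∀ k, 1 ≤ k → k ≤ m + 2 → 0 < ∑ i : Fin k, lam ((i:ℕ)+1) := by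
    intro k h1 h2
    rw [fin_sum_eq_Icc, ← hL]
    exact hLpos k h1 h2
  have hwnn : ∀ k, k ≤ m + 2 → ∀ i : Fin k, 0 ≤ lam ((i:ℕ)+1) := by
    intro k hk i
    exact hlam' _ (by omega) (by have := i.isLt; omega)
  -- M of the zero vector is zero
  have hM0 : ∀ k, 1 ≤ k → k ≤ m + 2 →
      M k (fun _ => (0:ℝ)) (fun i => lam ((i:ℕ)+1)) = 0 := by
    intro k h1 h2
    have h := hhom k (fun _ => 0) (fun i => lam ((i:ℕ)+1)) 2 h1 h2 (by norm_num)
      (fun _ => le_refl 0) (hwnn k h2) (hwsum k h1 h2)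
    simp only [mul_zero] at h
    linarith
  -- the function μ
  set μ : ℝ → ℝ := fun x => M (m+2)
      (fun i : Fin (m+2) => if (i : ℕ) = m then x else if (i : ℕ) = m + 1 then 1 else 0)
      (fun i => lam ((i : ℕ) + 1)) with hμ
  obtain ⟨d, hd, hder⟩ := hii
  have hder : HasDerivAt μ d 0 := hder
  have hμ0 : μ 0 = 1 := by
    have hfun : (fun i : Fin (m+2) => if (i : ℕ) = m then (0:ℝ) else if (i : ℕ) = m + 1 then 1 else 0)
        = (fun i : Fin (m+2) => if (i : ℕ) = m + 1 then (1:ℝ) else 0) := by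
      funext i
      rcases eq_or_ne (i:ℕ) m with h | h
      · simp [h, (by omega : ¬ m = m+1)]
      · simp [h]
    calc μ 0 = (M (m+2)
          (fun i : Fin (m+2) => if (i:ℕ) = m then (0:ℝ) else if (i:ℕ) = m+1 then 1 else 0)
          (fun i => lam ((i:ℕ)+1))) := rfl
      _ = 1 := by rw [hfun]; exact hi₂
  -- dispose of the case lam (m+2) = 0
  rcases eq_or_lt_of_le (hlam' (m+2) (by omega) le_rfl) with h0 | hlamn
  · rw [← h0, zero_div]
    exact div_nonneg (hlam' (m+1) (by omega) (by omega)) (hLpos (m+1) (by omega) (by omega)).le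
  -- main case: lam (m+2) > 0
  have hL1pos := hLpos (m+1) (by omega) (by omega)
  have hL2pos := hLpos (m+2) (by omega) (by omega)
  -- key inequality for t > 0
  have key : ∀ t : ℝ, 0 < t →
      ((lam (m+1) * t + lam (m+2)) / L (m+2)) *
        μ (lam (m+1) * t * L (m+2) / (L (m+1) * (lam (m+1) * t + lam (m+2))))
      ≤ (lam (m+1) * t + lam (m+2) * μ t) / L (m+2) := by
    intro t ht
    set x : ℕ → ℝ := fun j => if j = m + 1 then t else if j = m + 2 then 1 else 0 with hx
    have hxnn : ∀ i ∈ Icc 1 (m+2), 0 ≤ x i := by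
      intro i _
      simp only [hx]
      split_ifs <;> positivity
    have H := hked x hxnn
    set A : ℝ := (lam (m+1) * t + lam (m+2)) / L (m+2) with hA
    set s : ℝ := lam (m+1) * t * L (m+2) / (L (m+1) * (lam (m+1) * t + lam (m+2))) with hs
    have hnum : 0 < lam (m+1) * t + lam (m+2) := by
      have := hlam' (m+1) (by omega) (by omega)
      nlinarith
    have hApos : 0 < A := div_pos hnum hL2pos
    have hspos : 0 ≤ s := by
      rw [hs]
      apply div_nonneg
      · have := hlam' (m+1) (by omega) (by omega); positivity
      · positivity
    -- partial sums
    have hsum : ∀ N : ℕ, ∑ j ∈ Icc 1 N, lam j * x j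
        = (if m+1 ∈ Icc 1 N then lam (m+1) * t else 0)
          + (if m+2 ∈ Icc 1 N then lam (m+2) else 0) := by
      intro N
      apply two_spike_sum
      intro j hj
      simp only [hx]
      by_cases h1 : j = m + 1
      · simp [h1]
      · by_cases h2 : j = m + 2 <;> simp [h1, h2]
    -- LHS of Kedlaya
    have hLHS : M (m+2)
        (fun k : Fin (m+2) => (∑ j ∈ Icc 1 ((k : ℕ) + 1), lam j * x j) / L ((k : ℕ) + 1))
        (fun i => lam ((i : ℕ) + 1)) = A * μ s := by
      have hv : (fun k : Fin (m+2) => (∑ j ∈ Icc 1 ((k : ℕ) + 1), lam j * x j) / L ((k : ℕ) + 1))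
          = (fun k : Fin (m+2) => A *
              (if (k : ℕ) = m then s else if (k : ℕ) = m + 1 then 1 else 0)) := by
        funext k
        rw [hsum]
        have hk2 : (k : ℕ) < m + 2 := k.isLt
        rcases Nat.lt_trichotomy (k : ℕ) m with hlt | heq | hgt
        · have h1 : ¬ (m + 1 ∈ Icc 1 ((k:ℕ) + 1)) := by simp [Finset.mem_Icc]; omega
          have h2 : ¬ (m + 2 ∈ Icc 1 ((k:ℕ) + 1)) := by simp [Finset.mem_Icc]; omega
          have h3 : (k : ℕ) ≠ m := by omega
          have h4 : (k : ℕ) ≠ m + 1 := by omega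
          simp [h1, h2, h3, h4]
        · have h1 : (m + 1 ∈ Icc 1 ((k:ℕ) + 1)) := by simp [Finset.mem_Icc]; omega
          have h2 : ¬ (m + 2 ∈ Icc 1 ((k:ℕ) + 1)) := by simp [Finset.mem_Icc]; omega
          rw [if_pos h1, if_neg h2]
          simp only [heq, if_true, add_zero]
          simp only [hA, hs]
          field_simp
        · have heq : (k : ℕ) = m + 1 := by omega
          rw [heq]
          have h1 : (m + 1 ∈ Icc 1 (m + 1 + 1)) := by simp [Finset.mem_Icc]
          have h2 : (m + 2 ∈ Icc 1 (m + 1 + 1)) := by simp [Finset.mem_Icc]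
          have h3 : ¬ (m + 1 = m) := by omega
          simp [h1, h2, h3, hA, show m + 1 + 1 = m + 2 from rfl]
      rw [hv]
      rw [hhom (m+2) _ _ A (by omega) le_rfl hApos
        (by intro i; split_ifs <;> first | exact hspos | norm_num)
        (hwnn (m+2) le_rfl) (hwsum (m+2) (by omega) le_rfl)]
    -- RHS of Kedlaya
    have hRHS : (∑ k ∈ Icc 1 (m+2), lam k *
          M k (fun i : Fin k => x ((i : ℕ) + 1)) (fun i : Fin k => lam ((i : ℕ) + 1)))
        = lam (m+1) * t + lam (m+2) * μ t := by
      have := two_spike_sum (Icc 1 (m+2)) (m+1) (m+2)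
        (fun k => lam k * M k (fun i : Fin k => x ((i : ℕ) + 1)) (fun i : Fin k => lam ((i : ℕ) + 1)))
        (lam (m+1) * t) (lam (m+2) * μ t) ?_
      · rw [this]
        simp [Finset.mem_Icc]
      · intro k hk
        simp only [Finset.mem_Icc] at hk
        rcases Nat.lt_trichotomy k (m+1) with hlt | heq | hgt
        · -- k ≤ m : all entries zero
          have h1 : k ≠ m + 1 := by omega
          have h2 : k ≠ m + 2 := by omega
          simp only [h1, h2, if_false, add_zero]
          have hz : (fun i : Fin k => x ((i : ℕ) + 1)) = (fun _ : Fin k => (0:ℝ)) := by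
            funext i
            have : (i : ℕ) + 1 < m + 1 := by have := i.isLt; omega
            simp only [hx]
            simp only [if_neg (by omega : ¬ (i:ℕ) + 1 = m + 1),
              if_neg (by omega : ¬ (i:ℕ) + 1 = m + 2)]
          rw [hz, hM0 k hk.1 hk.2, mul_zero]
        · subst heq
          simp only [if_pos rfl, if_neg (by omega : m + 1 ≠ m + 2), add_zero]
          congr 1
          have hz : (fun i : Fin (m+1) => x ((i : ℕ) + 1))
              = (fun i : Fin (m+1) => t * (if (i : ℕ) = m then 1 else 0)) := by
            funext i
            have := i.isLt
            simp only [hx]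
            by_cases h : (i : ℕ) = m
            · simp [h]
            · simp only [if_neg (by omega : ¬ (i:ℕ) + 1 = m + 1),
                if_neg (by omega : ¬ (i:ℕ) + 1 = m + 2), if_neg h, mul_zero]
          rw [hz, hhom (m+1) _ _ t (by omega) (by omega) ht
            (by intro i; split_ifs <;> norm_num)
            (hwnn (m+1) (by omega)) (hwsum (m+1) (by omega) (by omega)), hi₁', mul_one]
        · have heq : k = m + 2 := by omega
          subst heq
          simp only [if_neg (by omega : m + 2 ≠ m + 1), if_pos rfl, zero_add]
          congr 1
          simp only [hμ]
          congr 1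
          funext i
          have := i.isLt
          simp only [hx]
          by_cases h : (i : ℕ) = m
          · simp [h]
          · by_cases h' : (i : ℕ) = m + 1
            · simp [h', h]
            · simp only [if_neg (by omega : ¬ (i:ℕ) + 1 = m + 1),
                if_neg (by omega : ¬ (i:ℕ) + 1 = m + 2), if_neg h, if_neg h']

    rw [hLHS, hRHS] at H
    exact H
  -- the function F and its derivative at 0
  set s : ℝ → ℝ := fun t => lam (m+1) * t * L (m+2) / (L (m+1) * (lam (m+1) * t + lam (m+2)))
    with hsdef
  set F : ℝ → ℝ := fun t => (lam (m+1) * t + lam (m+2) * μ t) / L (m+2)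
      - ((lam (m+1) * t + lam (m+2)) / L (m+2)) * μ (s t) with hFdef
  have hs0 : s 0 = 0 := by simp only [hsdef]; simp
  have hF0 : F 0 = 0 := by
    simp only [hFdef]
    simp only [hs0, hμ0, mul_zero, zero_add, mul_one]
    ring
  have hFnn : ∀ t, 0 < t → 0 ≤ F t := by
    intro t ht
    have := key t ht
    simp only [hFdef]
    linarith [this]
  -- derivative of s at 0
  have hv0 : L (m+1) * (lam (m+1) * 0 + lam (m+2)) ≠ 0 := by
    simp only [mul_zero, zero_add]
    positivity
  have hsder : HasDerivAt s (lam (m+1) * L (m+2) / (L (m+1) * lam (m+2))) 0 := by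
    have hu : HasDerivAt (fun t : ℝ => lam (m+1) * t * L (m+2)) (lam (m+1) * L (m+2)) 0 := by
      have := ((hasDerivAt_id (0:ℝ)).const_mul (lam (m+1))).mul_const (L (m+2))
      simpa using this
    have hv : HasDerivAt (fun t : ℝ => L (m+1) * (lam (m+1) * t + lam (m+2)))
        (L (m+1) * lam (m+1)) 0 := by
      have := (((hasDerivAt_id (0:ℝ)).const_mul (lam (m+1))).add_const (lam (m+2))).const_mul
        (L (m+1))
      simpa using this
    have := hu.div hv hv0
    rw [hsdef]
    refine this.congr_deriv ?_
    field_simp [hlamn.ne']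
    ring
  -- derivative of F at 0
  have hμs : HasDerivAt (fun t => μ (s t))
      (d * (lam (m+1) * L (m+2) / (L (m+1) * lam (m+2)))) 0 := by
    have : HasDerivAt μ d (s 0) := by rw [hs0]; exact hder
    exact this.comp 0 hsder
  have hFder : HasDerivAt F (d * (lam (m+2) / L (m+2) - lam (m+1) / L (m+1))) 0 := by
    have h1 : HasDerivAt (fun t : ℝ => (lam (m+1) * t + lam (m+2) * μ t) / L (m+2))
        ((lam (m+1) + lam (m+2) * d) / L (m+2)) 0 := by
      have := (((hasDerivAt_id (0:ℝ)).const_mul (lam (m+1))).add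
        (hder.const_mul (lam (m+2)))).div_const (L (m+2))
      simpa using this
    have h2 : HasDerivAt (fun t : ℝ => ((lam (m+1) * t + lam (m+2)) / L (m+2)) * μ (s t))
        ((lam (m+1) / L (m+2)) * μ (s 0)
          + ((lam (m+1) * 0 + lam (m+2)) / L (m+2))
            * (d * (lam (m+1) * L (m+2) / (L (m+1) * lam (m+2))))) 0 := by
      have ha : HasDerivAt (fun t : ℝ => (lam (m+1) * t + lam (m+2)) / L (m+2))
          (lam (m+1) / L (m+2)) 0 := by
        have := (((hasDerivAt_id (0:ℝ)).const_mul (lam (m+1))).add_const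
          (lam (m+2))).div_const (L (m+2))
        simpa using this
      exact ha.mul hμs
    have := h1.sub h2
    rw [hFdef]
    refine this.congr_deriv ?_
    rw [hs0, hμ0]
    field_simp
    ring
  -- derivative is nonnegative
  have hDnn : 0 ≤ d * (lam (m+2) / L (m+2) - lam (m+1) / L (m+1)) := by
    rw [hasDerivAt_iff_tendsto_slope] at hFder
    have hmono : (𝓝[>] (0:ℝ)) ≤ 𝓝[≠] (0:ℝ) :=
      nhdsWithin_mono 0 (fun x hx => ne_of_gt hx)
    refine ge_of_tendsto (hFder.mono_left hmono) ?_
    refine eventually_nhdsWithin_of_forall ?_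
    intro t ht
    have ht : (0:ℝ) < t := ht
    rw [slope_def_field]
    rw [hF0]
    have := hFnn t ht
    have : 0 ≤ F t / t := div_nonneg this ht.le
    simpa [div_eq_iff] using this
  -- conclude
  have hc : lam (m+2) / L (m+2) - lam (m+1) / L (m+1) ≤ 0 := by
    by_contra h
    push_neg at h
    nlinarith [hDnn]
  linarith
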